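/- Let Δp, Δf, Δg, Δt : ℝ → ℝ satisfy Δp′ = 2a_θ, Δf′ = a_r sin L + 2a_θ cos L, Δg′ = −a_r cos L + 2a_θ sin L, Δt′ = 1.5Δp − 2Δf cos L − 2Δg sin L on [L₀, L_f], with boundary conditions Δp(L₀) = Δf(L₀) = Δg(L₀) = 0, Δt(L₀) = 0, and Δp(L_f) = Δf(L_f) = Δg(L_f) = 0. Then Δt(L_f) = ∫_{L₀}^{L_f} (2a_r − 3L a_θ) dL. -/

import Mathlib

/-- For the linearized Sundman-transformed equations of motion with zero boundary
conditions on Δp, Δf, Δg, the final time difference is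
Δt(L_f) = ∫_{L₀}^{L_f} (2 a_r − 3 L a_θ) dL. -/
theorem delta_t_integral (L₀ Lf : ℝ) (hL : L₀ ≤ Lf)
    (Δp Δf Δg Δt ar aθ : ℝ → ℝ)
    (har : Continuous ar) (haθ : Continuous aθ)
    (hΔp : ∀ L ∈ Set.Icc L₀ Lf, HasDerivAt Δp (2 * aθ L) L)
    (hΔf : ∀ L ∈ Set.Icc L₀ Lf,
      HasDerivAt Δf (ar L * Real.sin L + 2 * aθ L * Real.cos L) L)
    (hΔg : ∀ L ∈ Set.Icc L₀ Lf,
      HasDerivAt Δg (-(ar L) * Real.cos L + 2 * aθ L * Real.sin L) L)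
    (hΔt : ∀ L ∈ Set.Icc L₀ Lf,
      HasDerivAt Δt (1.5 * Δp L - 2 * Δf L * Real.cos L - 2 * Δg L * Real.sin L) L)
    (hp0 : Δp L₀ = 0) (hf0 : Δf L₀ = 0) (hg0 : Δg L₀ = 0) (ht0 : Δt L₀ = 0)
    (hpf : Δp Lf = 0) (hff : Δf Lf = 0) (hgf : Δg Lf = 0) :
    Δt Lf = ∫ L in L₀..Lf, 2 * ar L - 3 * L * aθ L := by
  set H : ℝ → ℝ := fun L =>
    Δt L - 1.5 * L * Δp L + 2 * Δf L * Real.sin L - 2 * Δg L * Real.cos L with hH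
  have hderiv : ∀ L ∈ Set.uIcc L₀ Lf,
      HasDerivAt H (2 * ar L - 3 * L * aθ L) L := by
    intro L hLmem
    rw [Set.uIcc_of_le hL] at hLmem
    have h1 := hΔt L hLmem
    
    have hp' := hΔp L hLmem
    have hf' := hΔf L hLmem
    have hg' := hΔg L hLmem
    have hid : HasDerivAt (fun x : ℝ => x) 1 L := hasDerivAt_id L
    have hsin := Real.hasDerivAt_sin L
    have hcos := Real.hasDerivAt_cos L
    have hA : HasDerivAt (fun x => 1.5 * x * Δp x)
        (1.5 * (1 * Δp L + L * (2 * aθ L))) L := by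
      have := (hid.const_mul (1.5:ℝ)).mul hp'
      simpa [mul_assoc, mul_comm, mul_left_comm, mul_add] using
        ((hid.mul hp').const_mul (1.5:ℝ))
    have hB : HasDerivAt (fun x => 2 * Δf x * Real.sin x)
        (2 * ((ar L * Real.sin L + 2 * aθ L * Real.cos L) * Real.sin L
          + Δf L * Real.cos L)) L := by
      simpa [mul_assoc, mul_add] using ((hf'.mul hsin).const_mul (2:ℝ))
    have hC : HasDerivAt (fun x => 2 * Δg x * Real.cos x)
        (2 * ((-(ar L) * Real.cos L + 2 * aθ L * Real.sin L) * Real.cos L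
          + Δg L * (-Real.sin L))) L := by
      simpa [mul_assoc, mul_add] using ((hg'.mul hcos).const_mul (2:ℝ))
    have := ((h1.sub hA).add hB).sub hC
    refine this.congr_deriv ?_
    have hpy := Real.sin_sq_add_cos_sq L
    linear_combination (2 * ar L) * hpy
  have hcont : Continuous (fun L => 2 * ar L - 3 * L * aθ L) := by fun_prop
  have hint : IntervalIntegrable (fun L => 2 * ar L - 3 * L * aθ L)
      MeasureTheory.volume L₀ Lf := hcont.intervalIntegrable L₀ Lf
  have key := intervalIntegral.integral_eq_sub_of_hasDerivAt hderiv hint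
  have hH0 : H L₀ = 0 := by simp [hH, hp0, hf0, hg0, ht0]
  have hHf : H Lf = Δt Lf := by simp [hH, hpf, hff, hgf]
  rw [key, hHf, hH0, sub_zero]
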